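/- Let κ, τ, H > 0 with κ − 4τ² < 0, and for x ∈ [0, arctan(√κ/(2H))] define λ(x) = √(1 − (4H²/κ)tan²x)/√(1 + (4τ²/κ)tan²x) and y(x) = −arctan((τ/H)λ(x)) + (H/τ)·(√(4τ²−κ)/√(4H²+κ))·arctan((√(4τ²−κ)/√(4H²+κ))λ(x)). Then y'(x) = (H/τ) tan x · √(1 + (4τ²/κ)tan²x)/√(1 − (4H²/κ)tan²x) for x in the open interval, and y(arctan(√κ/(2H))) = 0. -/

import Mathlib

open Real

theorem profile_sphere_berger (κ τ H : ℝ) (hκ : 0 < κ) (hτ : 0 < τ) (hH : 0 < H)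
    (hκτ : κ - 4 * τ ^ 2 < 0)
    (lam y : ℝ → ℝ)
    (hlam : ∀ x, lam x = Real.sqrt (1 - (4 * H ^ 2 / κ) * Real.tan x ^ 2) /
      Real.sqrt (1 + (4 * τ ^ 2 / κ) * Real.tan x ^ 2))
    (hy : ∀ x, y x = -Real.arctan ((τ / H) * lam x) +
      (H / τ) * (Real.sqrt (4 * τ ^ 2 - κ) / Real.sqrt (4 * H ^ 2 + κ)) *
        Real.arctan ((Real.sqrt (4 * τ ^ 2 - κ) / Real.sqrt (4 * H ^ 2 + κ)) * lam x)) :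
    (∀ x ∈ Set.Ioo (0 : ℝ) (Real.arctan (Real.sqrt κ / (2 * H))),
      HasDerivAt y ((H / τ) * Real.tan x *
        Real.sqrt (1 + (4 * τ ^ 2 / κ) * Real.tan x ^ 2) /
        Real.sqrt (1 - (4 * H ^ 2 / κ) * Real.tan x ^ 2)) x) ∧
    y (Real.arctan (Real.sqrt κ / (2 * H))) = 0 := by
  have hyfun : y = fun x => -Real.arctan ((τ / H) *
      (Real.sqrt (1 - (4 * H ^ 2 / κ) * Real.tan x ^ 2) /
        Real.sqrt (1 + (4 * τ ^ 2 / κ) * Real.tan x ^ 2))) +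
      (H / τ) * (Real.sqrt (4 * τ ^ 2 - κ) / Real.sqrt (4 * H ^ 2 + κ)) *
        Real.arctan ((Real.sqrt (4 * τ ^ 2 - κ) / Real.sqrt (4 * H ^ 2 + κ)) *
          (Real.sqrt (1 - (4 * H ^ 2 / κ) * Real.tan x ^ 2) /
            Real.sqrt (1 + (4 * τ ^ 2 / κ) * Real.tan x ^ 2))) :=
    funext fun x => by rw [hy x, hlam x]
  have hAκ : (0:ℝ) < 4 * τ ^ 2 - κ := by linarith
  have hBκ : (0:ℝ) < 4 * H ^ 2 + κ := by positivity
  have hsA : 0 < Real.sqrt (4 * τ ^ 2 - κ) := Real.sqrt_pos.mpr hAκ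
  have hsB : 0 < Real.sqrt (4 * H ^ 2 + κ) := Real.sqrt_pos.mpr hBκ
  have hA2 : Real.sqrt (4 * τ ^ 2 - κ) ^ 2 = 4 * τ ^ 2 - κ := Real.sq_sqrt hAκ.le
  have hB2 : Real.sqrt (4 * H ^ 2 + κ) ^ 2 = 4 * H ^ 2 + κ := Real.sq_sqrt hBκ.le
  constructor
  · intro x hx
    obtain ⟨hx1, hx2⟩ := hx
    have hpi := Real.arctan_lt_pi_div_two (Real.sqrt κ / (2 * H))
    have hcos : 0 < Real.cos x := Real.cos_pos_of_mem_Ioo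
      ⟨by nlinarith [Real.pi_div_two_pos], lt_trans hx2 hpi⟩
    have ht0 : 0 < Real.tan x := Real.tan_pos_of_pos_of_lt_pi_div_two hx1 (lt_trans hx2 hpi)
    have ht1 : Real.tan x < Real.sqrt κ / (2 * H) := by
      have := Real.tan_lt_tan_of_nonneg_of_lt_pi_div_two (le_of_lt hx1) hpi hx2
      rwa [Real.tan_arctan] at this
    have ht2 : Real.tan x ^ 2 < κ / (4 * H ^ 2) := by
      have h := pow_lt_pow_left₀ ht1 ht0.le (two_ne_zero)
      rwa [div_pow, Real.sq_sqrt hκ.le, mul_pow, show ((2:ℝ)^2) = 4 by norm_num] at h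
    have hP : 0 < 1 - (4 * H ^ 2 / κ) * Real.tan x ^ 2 := by
      have h4H : (0:ℝ) < 4 * H ^ 2 := by positivity
      have := (lt_div_iff₀ h4H).mp ht2
      rw [sub_pos, div_mul_eq_mul_div, div_lt_one hκ]
      nlinarith
    have hQ : 0 < 1 + (4 * τ ^ 2 / κ) * Real.tan x ^ 2 := by positivity
    set t := Real.tan x with htdef
    set sP := Real.sqrt (1 - (4 * H ^ 2 / κ) * t ^ 2) with hsPdef
    set sQ := Real.sqrt (1 + (4 * τ ^ 2 / κ) * t ^ 2) with hsQdef
    set sA := Real.sqrt (4 * τ ^ 2 - κ) with hsAdef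
    set sB := Real.sqrt (4 * H ^ 2 + κ) with hsBdef
    have hsP : 0 < sP := Real.sqrt_pos.mpr hP
    have hsQ : 0 < sQ := Real.sqrt_pos.mpr hQ
    have hP2 : sP ^ 2 = 1 - (4 * H ^ 2 / κ) * t ^ 2 := Real.sq_sqrt hP.le
    have hQ2 : sQ ^ 2 = 1 + (4 * τ ^ 2 / κ) * t ^ 2 := Real.sq_sqrt hQ.le
    have hu : (0:ℝ) < 1 + t ^ 2 := by positivity
    have hHτ : (0:ℝ) < H ^ 2 + τ ^ 2 := by positivity
    have htand : HasDerivAt Real.tan (1 + t ^ 2) x := by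
      have h := Real.hasDerivAt_tan hcos.ne'
      have e : 1 / Real.cos x ^ 2 = 1 + t ^ 2 := by
        rw [← Real.inv_one_add_tan_sq hcos.ne', one_div, inv_inv]
      rwa [e] at h
    have hPd : HasDerivAt (fun x => 1 - (4 * H ^ 2 / κ) * Real.tan x ^ 2)
        (0 - (4 * H ^ 2 / κ) * ((2:ℕ) * t ^ 1 * (1 + t ^ 2))) x :=
      (hasDerivAt_const x 1).sub ((htand.pow 2).const_mul _)
    have hQd : HasDerivAt (fun x => 1 + (4 * τ ^ 2 / κ) * Real.tan x ^ 2)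
        (0 + (4 * τ ^ 2 / κ) * ((2:ℕ) * t ^ 1 * (1 + t ^ 2))) x :=
      (hasDerivAt_const x 1).add ((htand.pow 2).const_mul _)
    have hPne : 1 - 4 * H ^ 2 / κ * Real.tan x ^ 2 ≠ 0 := hP.ne'
    have hQne : 1 + 4 * τ ^ 2 / κ * Real.tan x ^ 2 ≠ 0 := hQ.ne'
    have hsQ : 0 < sQ := Real.sqrt_pos.mpr hQ
    have hsQne : Real.sqrt (1 + 4 * τ ^ 2 / κ * Real.tan x ^ 2) ≠ 0 := hsQ.ne'
    clear_value t sP sQ sA sB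
    have hsPd : HasDerivAt (fun x => Real.sqrt (1 - (4 * H ^ 2 / κ) * Real.tan x ^ 2))
        (-((4 * H ^ 2 / κ) * t * (1 + t ^ 2)) / sP) x := by
      convert hPd.sqrt hPne using 1
      rw [← htdef, ← hsPdef]
      push_cast
      field_simp
      ring
    have hsQd : HasDerivAt (fun x => Real.sqrt (1 + (4 * τ ^ 2 / κ) * Real.tan x ^ 2))
        ((4 * τ ^ 2 / κ) * t * (1 + t ^ 2) / sQ) x := by
      convert hQd.sqrt hQne using 1
      rw [← htdef, ← hsQdef]
      push_cast
      field_simp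
      ring
    have hlamd : HasDerivAt (fun x => Real.sqrt (1 - (4 * H ^ 2 / κ) * Real.tan x ^ 2) /
        Real.sqrt (1 + (4 * τ ^ 2 / κ) * Real.tan x ^ 2))
        (-((4 * (H ^ 2 + τ ^ 2) / κ) * t * (1 + t ^ 2)) / (sP * sQ ^ 3)) x := by
      refine (hsPd.div hsQd hsQne).congr_deriv (Eq.symm ?_)
      rw [← htdef, ← hsPdef, ← hsQdef]
      field_simp
      linear_combination H^2 * hQ2 + τ^2 * hP2
    have d1 : 1 + (τ / H * (sP / sQ)) ^ 2 = (H ^ 2 + τ ^ 2) / (H ^ 2 * sQ ^ 2) := by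
      rw [mul_pow, div_pow, div_pow, hP2]
      rw [show sQ ^ 2 = 1 + (4 * τ ^ 2 / κ) * t ^ 2 from hQ2]
      field_simp
      ring
    have d2 : 1 + (sA / sB * (sP / sQ)) ^ 2 =
        (4 * (H ^ 2 + τ ^ 2) * (1 + t ^ 2)) / (sB ^ 2 * sQ ^ 2) := by
      rw [mul_pow, div_pow, div_pow, hP2, hA2, hB2]
      rw [show sQ ^ 2 = 1 + (4 * τ ^ 2 / κ) * t ^ 2 from hQ2]
      field_simp
      ring
    have harc1 : HasDerivAt (fun x => Real.arctan ((τ / H) *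
        (Real.sqrt (1 - (4 * H ^ 2 / κ) * Real.tan x ^ 2) /
          Real.sqrt (1 + (4 * τ ^ 2 / κ) * Real.tan x ^ 2))))
        (-(4 * τ * H / κ * t * (1 + t ^ 2)) / (sP * sQ)) x := by
      convert (hlamd.const_mul (τ / H)).arctan using 1
      rw [← htdef, ← hsPdef, ← hsQdef, d1]
      field_simp
    have harc2 : HasDerivAt (fun x => Real.arctan ((sA / sB) *
        (Real.sqrt (1 - (4 * H ^ 2 / κ) * Real.tan x ^ 2) /
          Real.sqrt (1 + (4 * τ ^ 2 / κ) * Real.tan x ^ 2))))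
        (-(sA * sB * t) / (κ * sP * sQ)) x := by
      convert (hlamd.const_mul (sA / sB)).arctan using 1
      rw [← htdef, ← hsPdef, ← hsQdef, d2]
      field_simp
    have hyd := (harc1.neg).add (harc2.const_mul ((H / τ) * (sA / sB)))
    rw [hyfun]
    refine hyd.congr_deriv (Eq.symm ?_)
    field_simp [hsP.ne', hsQ.ne', hsA.ne', hsB.ne', hτ.ne', hH.ne', hκ.ne']
    have hQ2' : κ * sQ ^ 2 = κ + 4 * τ ^ 2 * t ^ 2 := by
      rw [hQ2]; field_simp
    linear_combination hQ2' + hA2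
  · rw [hy, hlam, Real.tan_arctan]
    have h0 : 1 - (4 * H ^ 2 / κ) * (Real.sqrt κ / (2 * H)) ^ 2 = 0 := by
      rw [div_pow, Real.sq_sqrt hκ.le, mul_pow]
      field_simp
      ring
    rw [h0, Real.sqrt_zero, zero_div, mul_zero, mul_zero, Real.arctan_zero, neg_zero,
      mul_zero, zero_add]
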